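/- arXiv:1910.03844 — 4 statements merged into one kernel-verified Lean document; each statement's English description precedes it below -/
import Mathlib

section
/- Let G be a finite symmetric directed graph (i.e., (u,v) is an edge whenever (v,u) is) in which every vertex has in-degree at least 1. Then for every edge e of G, the number of oriented spanning trees of the directed line graph L(G) rooted at the vertex e is at least the number of oriented spanning trees of G rooted at the tail of e. -/
/-- `T` (a finite set of ordered pairs) is a spanning arborescence of the digraph `E`
converging to the root `r`: its pairs are edges of `E`, every vertex other than `r`
has exactly one outgoing edge in `T`, the root has none, and every vertex has a
directed path in `T` to `r`. -/
def IsArborescence {V : Type*} [DecidableEq V] (E : V → V → Prop) (r : V)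
    (T : Finset (V × V)) : Prop :=
  (∀ p ∈ T, E p.1 p.2) ∧
  (∀ v : V, v ≠ r → (T.filter (fun p => p.1 = v)).card = 1) ∧
  ((T.filter (fun p => p.1 = r)).card = 0) ∧
  (∀ v : V, Relation.ReflTransGen (fun a b => (a, b) ∈ T) v r)

/-- `κ(G, r)`: the number of oriented spanning trees of the digraph `E` rooted at `r`. -/
noncomputable def kappa (V : Type*) [DecidableEq V] (E : V → V → Prop) (r : V) : ℕ :=
  Nat.card {T : Finset (V × V) // IsArborescence E r T}

def EdgeType {V : Type*} (E : V → V → Prop) : Type _ := {p : V × V // E p.1 p.2}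

instance {V : Type*} [DecidableEq V] (E : V → V → Prop) : DecidableEq (EdgeType E) :=
  fun a b => decidable_of_iff (a.1 = b.1) Subtype.ext_iff.symm

def lineRel {V : Type*} (E : V → V → Prop) (e₁ e₂ : EdgeType E) : Prop :=
  e₁.1.2 = e₂.1.1

instance edgeTypeFintype {V : Type*} [Fintype V] [DecidableEq V] (E : V → V → Prop)
    [DecidableRel E] : Fintype (EdgeType E) :=
  Subtype.fintype fun p : V × V => E p.1 p.2

open Classical in
/-- The successor edge of `f` determined by a tree `T`: the (unique) edge of `T`
leaving the head of `f`, if there is one. -/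
noncomputable def lgNext {V : Type*} (E : V → V → Prop)
    (e : EdgeType E) (T : Finset (V × V)) (f : EdgeType E) : EdgeType E :=
  if h : ∃ g : EdgeType E, g.1 ∈ T ∧ g.1.1 = f.1.2 then h.choose else e

open Classical in
noncomputable def lgSucc {V : Type*} (E : V → V → Prop)
    (e : EdgeType E) (T : Finset (V × V)) (f : EdgeType E) : EdgeType E :=
  if f.1.2 = e.1.1 then e else lgNext E e T f

/-- The lifted tree on the line graph. -/
noncomputable def lgF {V : Type*} [Fintype V] [DecidableEq V] (E : V → V → Prop)
    [DecidableRel E] (e : EdgeType E) (T : Finset (V × V)) :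
    Finset (EdgeType E × EdgeType E) :=
  (Finset.univ.filter fun f : EdgeType E => f ≠ e).image fun f => (f, lgSucc E e T f)

lemma mem_lgF {V : Type*} [Fintype V] [DecidableEq V] {E : V → V → Prop}
    [DecidableRel E] {e : EdgeType E} {T : Finset (V × V)}
    {p : EdgeType E × EdgeType E} :
    p ∈ lgF E e T ↔ p.1 ≠ e ∧ p.2 = lgSucc E e T p.1 := by
  unfold lgF
  simp only [Finset.mem_image, Finset.mem_filter, Finset.mem_univ, true_and]
  constructor
  · rintro ⟨a, ha, rfl⟩; exact ⟨ha, rfl⟩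
  · rintro ⟨h1, h2⟩
    exact ⟨p.1, h1, by rw [← h2]⟩

section Aux

variable {V : Type*} [Fintype V] [DecidableEq V] {E : V → V → Prop} [DecidableRel E]

lemma arb_exedge {r : V} {T : Finset (V × V)} (hT : IsArborescence E r T)
    {v : V} (hv : v ≠ r) : ∃ p ∈ T, p.1 = v := by
  obtain ⟨a, ha⟩ := Finset.card_eq_one.mp (hT.2.1 v hv)
  have haf : a ∈ T.filter (fun p => p.1 = v) := ha ▸ Finset.mem_singleton_self a
  exact ⟨a, (Finset.mem_filter.mp haf).1, (Finset.mem_filter.mp haf).2⟩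

lemma arb_uniq {r : V} {T : Finset (V × V)} (hT : IsArborescence E r T)
    {v : V} (hv : v ≠ r) {p q : V × V} (hp : p ∈ T) (hpv : p.1 = v)
    (hq : q ∈ T) (hqv : q.1 = v) : p = q := by
  obtain ⟨a, ha⟩ := Finset.card_eq_one.mp (hT.2.1 v hv)
  have h1 : p ∈ T.filter (fun p => p.1 = v) := Finset.mem_filter.mpr ⟨hp, hpv⟩
  have h2 : q ∈ T.filter (fun p => p.1 = v) := Finset.mem_filter.mpr ⟨hq, hqv⟩
  rw [ha, Finset.mem_singleton] at h1 h2
  rw [h1, h2]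

lemma arb_root_no_out {r : V} {T : Finset (V × V)} (hT : IsArborescence E r T)
    {p : V × V} (hp : p ∈ T) : p.1 ≠ r := by
  intro hc
  have h1 : p ∈ T.filter (fun q => q.1 = r) := Finset.mem_filter.mpr ⟨hp, hc⟩
  have h2 := Finset.card_eq_zero.mp hT.2.2.1
  rw [h2] at h1
  exact absurd h1 (Finset.notMem_empty p)

lemma lgNext_spec {e : EdgeType E} {T : Finset (V × V)}
    (hT : IsArborescence E e.1.1 T) {f : EdgeType E} (hf : f.1.2 ≠ e.1.1) :
    (lgNext E e T f).1 ∈ T ∧ (lgNext E e T f).1.1 = f.1.2 := by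
  obtain ⟨p, hp, hpv⟩ := arb_exedge hT hf
  have hE : E p.1 p.2 := hT.1 p hp
  have hex : ∃ g : EdgeType E, g.1 ∈ T ∧ g.1.1 = f.1.2 := ⟨⟨p, hE⟩, hp, hpv⟩
  unfold lgNext
  rw [dif_pos hex]
  exact hex.choose_spec

lemma lgF_isArborescence {e : EdgeType E} {T : Finset (V × V)}
    (hT : IsArborescence E e.1.1 T) :
    IsArborescence (lineRel E) e (lgF E e T) := by
  refine ⟨?_, ?_, ?_, ?_⟩
  · -- edges of lgF are line-graph edges
    intro p hp
    obtain ⟨hp1, hp2⟩ := mem_lgF.mp hp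
    show p.1.1.2 = p.2.1.1
    rw [hp2]
    unfold lgSucc
    by_cases h : p.1.1.2 = e.1.1
    · rw [if_pos h]; exact h
    · rw [if_neg h]; exact (lgNext_spec hT h).2.symm
  · -- out-degree 1 for f ≠ e
    intro f hf
    have : (lgF E e T).filter (fun p => p.1 = f) = {(f, lgSucc E e T f)} := by
      ext p
      simp only [Finset.mem_filter, Finset.mem_singleton]
      constructor
      · rintro ⟨hp, hp1⟩
        obtain ⟨_, h2⟩ := mem_lgF.mp hp
        have : p = (p.1, p.2) := rfl
        rw [this, hp1, h2, hp1]
      · rintro rfl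
        exact ⟨mem_lgF.mpr ⟨hf, rfl⟩, rfl⟩
    rw [this, Finset.card_singleton]
  · -- out-degree 0 at e
    rw [Finset.card_eq_zero]
    ext p
    simp only [Finset.mem_filter, Finset.notMem_empty, iff_false, not_and]
    intro hp hc
    exact (mem_lgF.mp hp).1 hc
  · -- reachability
    intro f
    have key : ∀ (v : V), Relation.ReflTransGen (fun a b => (a, b) ∈ T) v e.1.1 →
        ∀ g : EdgeType E, g.1.2 = v →
        Relation.ReflTransGen (fun a b : EdgeType E => (a, b) ∈ lgF E e T) g e := by
      intro v hv
      induction hv using Relation.ReflTransGen.head_induction_on with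
      | refl =>
        intro g hg
        by_cases hge : g = e
        · subst hge; exact Relation.ReflTransGen.refl
        · refine Relation.ReflTransGen.single (mem_lgF.mpr ⟨hge, ?_⟩)
          show e = lgSucc E e T g
          unfold lgSucc
          rw [if_pos hg]
      | @head a c hac hcb ih =>
        intro g hg
        by_cases hge : g = e
        · subst hge; exact Relation.ReflTransGen.refl
        · have har : a ≠ e.1.1 := arb_root_no_out hT hac
          have hgne : g.1.2 ≠ e.1.1 := by rw [hg]; exact har
          have hn := lgNext_spec hT hgne
          have hval : (lgNext E e T g).1 = (a, c) :=
            arb_uniq hT har hn.1 (hn.2.trans hg) hac rfl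
          have hstep : (g, lgNext E e T g) ∈ lgF E e T := by
            refine mem_lgF.mpr ⟨hge, ?_⟩
            show lgNext E e T g = lgSucc E e T g
            unfold lgSucc
            rw [if_neg hgne]
          exact Relation.ReflTransGen.head hstep
            (ih (lgNext E e T g) (by rw [hval]))
    exact key f.1.2 (hT.2.2.2 f.1.2) f rfl

lemma lgF_subset_of_eq (hsymm : ∀ u v, E u v → E v u) {e : EdgeType E}
    {T₁ T₂ : Finset (V × V)} (h₁ : IsArborescence E e.1.1 T₁)
    (h₂ : IsArborescence E e.1.1 T₂) (hF : lgF E e T₁ = lgF E e T₂) :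
    T₁ ⊆ T₂ := by
  intro p hp
  have hE : E p.1 p.2 := h₁.1 p hp
  have hpr : p.1 ≠ e.1.1 := arb_root_no_out h₁ hp
  by_cases hcase : ∃ f : EdgeType E, f ≠ e ∧ f.1.2 = p.1
  · obtain ⟨f, hfe, hfp⟩ := hcase
    have hm1 : (f, lgSucc E e T₁ f) ∈ lgF E e T₁ := mem_lgF.mpr ⟨hfe, rfl⟩
    rw [hF] at hm1
    have hσ : lgSucc E e T₁ f = lgSucc E e T₂ f := (mem_lgF.mp hm1).2
    have hne : f.1.2 ≠ e.1.1 := by rw [hfp]; exact hpr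
    have e1 := lgNext_spec h₁ hne
    have e2 := lgNext_spec h₂ hne
    have hs : lgNext E e T₁ f = lgNext E e T₂ f := by
      unfold lgSucc at hσ
      rwa [if_neg hne, if_neg hne] at hσ
    have hval : (lgNext E e T₁ f).1 = p :=
      arb_uniq h₁ hpr e1.1 (e1.2.trans hfp) hp rfl
    rw [hs] at hval
    rw [← hval]
    exact e2.1
  · push_neg at hcase
    have h1 : (⟨(p.2, p.1), hsymm _ _ hE⟩ : EdgeType E) = e := by
      by_contra hc
      exact hcase _ hc rfl
    have hp2 : p.2 = e.1.1 := congrArg (fun x : EdgeType E => x.1.1) h1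
    obtain ⟨q, hq, hq1⟩ := arb_exedge h₂ hpr
    have hEq : E q.1 q.2 := h₂.1 q hq
    have h2' : (⟨(q.2, q.1), hsymm _ _ hEq⟩ : EdgeType E) = e := by
      by_contra hc
      exact hcase _ hc hq1
    have hq2 : q.2 = e.1.1 := congrArg (fun x : EdgeType E => x.1.1) h2'
    have hpq : p = q := by
      have : p = (p.1, p.2) := rfl
      rw [this, hp2, ← hq1, ← hq2]
    rw [hpq]
    exact hq

end Aux

/-- For a finite symmetric directed graph with all in-degrees at least one, the number
of oriented spanning trees of the directed line graph rooted at an edge `e` is at least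
the number of oriented spanning trees of the graph rooted at the tail of `e`. -/
theorem kappa_line_graph_ge {V : Type*} [Fintype V] [DecidableEq V]
    (E : V → V → Prop) [DecidableRel E]
    (hsymm : ∀ u v, E u v → E v u)
    (hin : ∀ v : V, ∃ u : V, E u v)
    (e : EdgeType E) :
    kappa V E e.1.1 ≤ kappa (EdgeType E) (lineRel E) e := by
  classical
  have hinj : Function.Injective
      (fun T : {T : Finset (V × V) // IsArborescence E e.1.1 T} =>
        (⟨lgF E e T.1, lgF_isArborescence T.2⟩ :
          {S : Finset (EdgeType E × EdgeType E) // IsArborescence (lineRel E) e S})) := by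
    rintro ⟨T₁, h₁⟩ ⟨T₂, h₂⟩ hEq
    simp only [Subtype.mk.injEq] at hEq ⊢
    exact Finset.Subset.antisymm (lgF_subset_of_eq hsymm h₁ h₂ hEq)
      (lgF_subset_of_eq hsymm h₂ h₁ hEq.symm)
  exact Nat.card_le_card_of_injective _ hinj
end

section
/- Let G be a finite symmetric directed graph with every vertex of in-degree at least 1. Then G has an oriented spanning tree if and only if its directed line graph L(G) has an oriented spanning tree. -/
def hasOrientedSpanningTree {V : Type*} (E : V → V → Prop) : Prop :=
  ∃ r : V, ∀ v : V, Relation.ReflTransGen E v r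

lemma line_to_base {V : Type*} (E : V → V → Prop) {e₁ e₂ : EdgeType E}
    (h : Relation.ReflTransGen (lineRel E) e₁ e₂) :
    Relation.ReflTransGen E e₁.1.2 e₂.1.2 := by
  induction h with
  | refl => exact Relation.ReflTransGen.refl
  | tail _ hstep ih =>
    rename_i b c _
    exact ih.tail (hstep ▸ c.2)

/-- For a finite symmetric directed graph in which every vertex has in-degree at least one,
the graph has an oriented spanning tree iff its directed line graph does. -/
theorem ost_iff_line_graph_ost {V : Type*} [Fintype V] (E : V → V → Prop)
    (hsymm : ∀ u v, E u v → E v u)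
    (hin : ∀ v : V, ∃ u : V, E u v) :
    hasOrientedSpanningTree E ↔ hasOrientedSpanningTree (lineRel E) := by
  constructor
  · rintro ⟨r, hr⟩
    obtain ⟨u, hur⟩ := hin r
    have hru : E r u := hsymm _ _ hur
    set t : EdgeType E := ⟨(u, r), hur⟩ with ht
    refine ⟨t, fun e => ?_⟩
    have key : ∀ y : V, Relation.ReflTransGen E y r →
        ∀ e : EdgeType E, e.1.2 = y → Relation.ReflTransGen (lineRel E) e t := by
      intro y hy
      induction hy using Relation.ReflTransGen.head_induction_on with
      | refl =>
        intro e he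
        have h1 : lineRel E e ⟨(r, u), hru⟩ := he
        have h2 : lineRel E ⟨(r, u), hru⟩ t := rfl
        exact (Relation.ReflTransGen.single h1).tail h2
      | head hstep _ ih =>
        rename_i a b _
        intro e he
        have h1 : lineRel E e ⟨(a, b), hstep⟩ := he
        exact (Relation.ReflTransGen.single h1).trans (ih ⟨(a, b), hstep⟩ rfl)
    exact key e.1.2 (hr e.1.2) e rfl
  · rintro ⟨t, ht⟩
    refine ⟨t.1.2, fun v => ?_⟩
    obtain ⟨u, huv⟩ := hin v
    exact line_to_base E (ht ⟨(u, v), huv⟩)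
end

section
/- Let G be a finite symmetric directed graph that has an oriented spanning tree with root vertex r. Then for every neighbor v of r in G, the directed line graph L(G) has an oriented spanning tree rooted at the vertex corresponding to the edge (r, v). -/
/-- If a finite symmetric directed graph has an oriented spanning tree with root `r`,
then for every neighbor `v` of `r`, the directed line graph has an oriented spanning
tree rooted at the vertex corresponding to the edge `(r, v)`. -/
theorem line_graph_ost_rooted_at_root_edge {V : Type*} [Fintype V] (E : V → V → Prop)
    (hsymm : ∀ u v, E u v → E v u)
    (r : V) (hroot : ∀ u : V, Relation.ReflTransGen E u r)
    (v : V) (hv : E r v) :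
    ∀ e : EdgeType E, Relation.ReflTransGen (lineRel E) e ⟨(r, v), hv⟩ := by
  have key : ∀ b, Relation.ReflTransGen E b r → ∀ e : EdgeType E, e.1.2 = b →
      Relation.ReflTransGen (lineRel E) e ⟨(r, v), hv⟩ := by
    intro b hb
    induction hb using Relation.ReflTransGen.head_induction_on with
    | refl => intro e he; exact Relation.ReflTransGen.single he
    | head h _ ih =>
        intro e he
        exact Relation.ReflTransGen.head (show lineRel E e ⟨(_, _), h⟩ from he) (ih ⟨(_, _), h⟩ rfl)
  intro e
  exact key e.1.2 (hroot _) e rfl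
end

section
/- Let L be the Laplacian matrix of a finite directed weighted graph G with nonnegative weights. Then G has an oriented spanning tree if and only if L has a simple zero eigenvalue with right eigenvector the all-ones vector, and in that case every other eigenvalue of L has strictly positive real part. -/
open Matrix Polynomial



lemma my_charpoly_eval {R : Type*} [CommRing R] {m : Type*} [Fintype m] [DecidableEq m]
    (M : Matrix m m R) (x : R) : M.charpoly.eval x = (x • (1 : Matrix m m R) - M).det := by
  have h : (charmatrix M).map (evalRingHom x) = x • (1 : Matrix m m R) - M := by
    ext i j
    by_cases hij : i = j
    · subst hij; simp [charmatrix_apply_eq, Matrix.one_apply]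
    · simp [charmatrix_apply_ne _ _ _ (Ne.symm hij), Matrix.one_apply, Ne.symm hij, hij]
  calc M.charpoly.eval x = (evalRingHom x) (charmatrix M).det := rfl
    _ = ((charmatrix M).map (evalRingHom x)).det := (RingHom.map_det _ _)
    _ = _ := by rw [h]

lemma my_charpoly_transpose {R : Type*} [CommRing R] {m : Type*} [Fintype m] [DecidableEq m]
    (M : Matrix m m R) : Mᵀ.charpoly = M.charpoly := by
  have h : charmatrix Mᵀ = (charmatrix M)ᵀ := by
    ext i j
    by_cases hij : i = j
    · subst hij; simp [charmatrix_apply_eq]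
    · simp [charmatrix_apply_ne _ _ _ (Ne.symm hij), charmatrix_apply_ne _ _ _ hij,
        Matrix.transpose_apply]
  rw [Matrix.charpoly, Matrix.charpoly, h, Matrix.det_transpose]

lemma my_charpoly_toLin' {m : Type*} [Fintype m] [DecidableEq m] {K : Type*} [Field K]
    (M : Matrix m m K) : (Matrix.toLin' M).charpoly = M.charpoly := by
  rw [← LinearMap.charpoly_toMatrix (Matrix.toLin' M) (Pi.basisFun K m),
    LinearMap.toMatrix_eq_toMatrix', LinearMap.toMatrix'_toLin']


variable {n : ℕ} {a : Fin n → Fin n → ℝ} {L : Matrix (Fin n) (Fin n) ℝ}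

lemma my_row (hdiag : ∀ i, a i i = 0)
    (hL : ∀ i j, L i j = if j = i then ∑ k, a i k else -a i j)
    (v : Fin n → ℝ) (i : Fin n) :
    L.mulVec v i = ∑ j, a i j * (v i - v j) := by
  have hmem : i ∈ Finset.univ := Finset.mem_univ i
  have lhs : L.mulVec v i
      = (∑ k, a i k) * v i + ∑ j ∈ Finset.univ.erase i, -(a i j * v j) := by
    rw [Matrix.mulVec, dotProduct, ← Finset.add_sum_erase _ _ hmem]
    congr 1
    · rw [hL]; simp
    · exact Finset.sum_congr rfl fun j hj => by
        rw [hL, if_neg (Finset.ne_of_mem_erase hj)]; ring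
  have rhs : ∑ j, a i j * (v i - v j)
      = (∑ k, a i k) * v i - ∑ j, a i j * v j := by
    rw [Finset.sum_mul]
    rw [← Finset.sum_sub_distrib]
    exact Finset.sum_congr rfl fun j _ => by ring
  have h2 : ∑ j, a i j * v j = ∑ j ∈ Finset.univ.erase i, a i j * v j := by
    rw [← Finset.add_sum_erase _ _ hmem, hdiag, zero_mul, zero_add]
  rw [lhs, rhs, h2, Finset.sum_neg_distrib]
  ring

lemma my_mulVec_one (hdiag : ∀ i, a i i = 0)
    (hL : ∀ i j, L i j = if j = i then ∑ k, a i k else -a i j) :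
    L.mulVec (fun _ => (1:ℝ)) = 0 := by
  funext i
  rw [my_row hdiag hL]
  simp

lemma my_reach_max (ha : ∀ i j, 0 ≤ a i j) (hdiag : ∀ i, a i i = 0)
    (hL : ∀ i j, L i j = if j = i then ∑ k, a i k else -a i j)
    {v : Fin n → ℝ} (hv : L.mulVec v = 0) {M : ℝ} (hM : ∀ j, v j ≤ M)
    {i r : Fin n} (h : Relation.ReflTransGen (fun i j => 0 < a i j) i r)
    (hvi : v i = M) : v r = M := by
  induction h using Relation.ReflTransGen.head_induction_on with
  | refl => exact hvi
  | head hab hbr ih =>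
    rename_i x y
    apply ih
    have hx : L.mulVec v x = 0 := by rw [hv]; rfl
    rw [my_row hdiag hL] at hx
    have hnn : ∀ j ∈ Finset.univ, (0:ℝ) ≤ a x j * (v x - v j) := by
      intro j _
      exact mul_nonneg (ha x j) (by rw [hvi]; linarith [hM j])
    have := (Finset.sum_eq_zero_iff_of_nonneg hnn).mp hx y (Finset.mem_univ y)
    have hy : v x - v y = 0 := by
      rcases mul_eq_zero.mp this with h1 | h1
      · exact absurd h1 (ne_of_gt hab)
      · exact h1
    rw [← hvi]; linarith

lemma my_kernel_const (ha : ∀ i j, 0 ≤ a i j) (hdiag : ∀ i, a i i = 0)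
    (hL : ∀ i j, L i j = if j = i then ∑ k, a i k else -a i j)
    {r : Fin n} (harb : ∀ v : Fin n, Relation.ReflTransGen (fun i j => 0 < a i j) v r)
    {v : Fin n → ℝ} (hv : L.mulVec v = 0) : ∀ i, v i = v r := by
  have : Nonempty (Fin n) := ⟨r⟩
  obtain ⟨i0, -, hi0⟩ := Finset.exists_max_image Finset.univ v ⟨r, Finset.mem_univ r⟩
  obtain ⟨i1, -, hi1⟩ := Finset.exists_min_image Finset.univ v ⟨r, Finset.mem_univ r⟩
  have hmax : v r = v i0 :=
    my_reach_max ha hdiag hL hv (fun j => hi0 j (Finset.mem_univ j)) (harb i0) rfl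
  have hneg : L.mulVec (-v) = 0 := by
    rw [Matrix.mulVec_neg, hv, neg_zero]
  have hmin : (-v) r = (-v) i1 :=
    my_reach_max ha hdiag hL hneg
      (fun j => neg_le_neg (hi1 j (Finset.mem_univ j))) (harb i1) rfl
  intro i
  have h1 : v i ≤ v i0 := hi0 i (Finset.mem_univ i)
  have h2 : v i1 ≤ v i := hi1 i (Finset.mem_univ i)
  simp only [Pi.neg_apply, neg_inj] at hmin
  linarith [hmax, hmin]

lemma my_const_zero (ha : ∀ i j, 0 ≤ a i j) (hdiag : ∀ i, a i i = 0)
    (hL : ∀ i j, L i j = if j = i then ∑ k, a i k else -a i j) [NeZero n]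
    {v : Fin n → ℝ} {c : ℝ} (hv : L.mulVec v = fun _ => c) : c = 0 := by
  have : Nonempty (Fin n) := ⟨⟨0, Nat.pos_of_ne_zero (NeZero.ne n)⟩⟩
  obtain ⟨i0, -, hi0⟩ := Finset.exists_max_image Finset.univ v Finset.univ_nonempty
  obtain ⟨i1, -, hi1⟩ := Finset.exists_min_image Finset.univ v Finset.univ_nonempty
  have h0 : L.mulVec v i0 = c := by rw [hv]
  have h1 : L.mulVec v i1 = c := by rw [hv]
  rw [my_row hdiag hL] at h0 h1
  have hge : 0 ≤ c := by
    rw [← h0]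
    exact Finset.sum_nonneg fun j _ =>
      mul_nonneg (ha i0 j) (by linarith [hi0 j (Finset.mem_univ j)])
  have hle : c ≤ 0 := by
    rw [← h1]
    exact Finset.sum_nonpos fun j _ =>
      mul_nonpos_of_nonneg_of_nonpos (ha i1 j) (by linarith [hi1 j (Finset.mem_univ j)])
  linarith

lemma my_genker (ha : ∀ i j, 0 ≤ a i j) (hdiag : ∀ i, a i i = 0)
    (hL : ∀ i j, L i j = if j = i then ∑ k, a i k else -a i j) [NeZero n]
    {r : Fin n} (harb : ∀ v : Fin n, Relation.ReflTransGen (fun i j => 0 < a i j) v r) :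
    ∀ (k : ℕ) (v : Fin n → ℝ), (L ^ (k+1)).mulVec v = 0 → L.mulVec v = 0 := by
  intro k
  induction k with
  | zero => intro v h; rwa [pow_one] at h
  | succ k ih =>
    intro v h
    have h2 : (L ^ (k+1)).mulVec (L.mulVec v) = 0 := by
      rw [Matrix.mulVec_mulVec, ← pow_succ]
      exact h
    have h3 : L.mulVec (L.mulVec v) = 0 := ih _ h2
    have h4 : ∀ i, L.mulVec v i = L.mulVec v r := my_kernel_const ha hdiag hL harb h3
    have h5 : L.mulVec v = fun _ => L.mulVec v r := funext h4
    have h6 : L.mulVec v r = 0 := my_const_zero ha hdiag hL h5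
    rw [h5, h6]
    rfl

lemma my_toLin'_pow {m : Type*} [Fintype m] [DecidableEq m] {K : Type*} [Field K]
    (M : Matrix m m K) (k : ℕ) (x : m → K) :
    ((Matrix.toLin' M) ^ k) x = (M ^ k).mulVec x := by
  induction k generalizing x with
  | zero => simp [Matrix.one_mulVec]
  | succ k ih =>
    rw [pow_succ', pow_succ', Module.End.mul_apply, Matrix.toLin'_apply, ih,
      Matrix.mulVec_mulVec]

lemma my_maxGen_eq_span (ha : ∀ i j, 0 ≤ a i j) (hdiag : ∀ i, a i i = 0)
    (hL : ∀ i j, L i j = if j = i then ∑ k, a i k else -a i j) [NeZero n]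
    {r : Fin n} (harb : ∀ v : Fin n, Relation.ReflTransGen (fun i j => 0 < a i j) v r) :
    Module.End.maxGenEigenspace (Matrix.toLin' L) 0 = Submodule.span ℝ {(fun _ => (1:ℝ))} := by
  apply le_antisymm
  · intro x hx
    rw [Module.End.mem_maxGenEigenspace] at hx
    obtain ⟨k, hk⟩ := hx
    simp only [zero_smul, sub_zero] at hk
    rw [my_toLin'_pow] at hk
    rcases k with _ | k
    · rw [pow_zero, Matrix.one_mulVec] at hk
      rw [hk]; exact Submodule.zero_mem _
    · have hx0 : L.mulVec x = 0 := my_genker ha hdiag hL harb k x hk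
      have hc : ∀ i, x i = x r := my_kernel_const ha hdiag hL harb hx0
      have : x = (x r) • (fun _ => (1:ℝ)) := by
        funext i; simp [hc i]
      rw [this]
      exact Submodule.smul_mem _ _ (Submodule.mem_span_singleton_self _)
  · rw [Submodule.span_le, Set.singleton_subset_iff]
    rw [SetLike.mem_coe, Module.End.mem_maxGenEigenspace]
    refine ⟨1, ?_⟩
    simp only [zero_smul, sub_zero, pow_one]
    rw [Matrix.toLin'_apply, my_mulVec_one hdiag hL]

lemma my_rm_eq_one (ha : ∀ i j, 0 ≤ a i j) (hdiag : ∀ i, a i i = 0)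
    (hL : ∀ i j, L i j = if j = i then ∑ k, a i k else -a i j) [NeZero n]
    {r : Fin n} (harb : ∀ v : Fin n, Relation.ReflTransGen (fun i j => 0 < a i j) v r) :
    L.charpoly.rootMultiplicity 0 = 1 := by
  have : Nonempty (Fin n) := ⟨r⟩
  rw [Polynomial.rootMultiplicity_eq_natTrailingDegree', ← my_charpoly_toLin' L,
    ← LinearMap.finrank_maxGenEigenspace_zero_eq, my_maxGen_eq_span ha hdiag hL harb]
  have hone : (fun _ => (1:ℝ)) ≠ (0 : Fin n → ℝ) := by
    intro h
    have := congrFun h (Classical.arbitrary (Fin n))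
    norm_num at this
  exact finrank_span_singleton hone

lemma my_pair_to_global [NeZero n] {e : Fin n → Fin n → Prop}
    (h : ∀ u w : Fin n, ∃ x, Relation.ReflTransGen e u x ∧ Relation.ReflTransGen e w x) :
    ∃ r, ∀ v, Relation.ReflTransGen e v r := by
  have : Nonempty (Fin n) := ⟨⟨0, Nat.pos_of_ne_zero (NeZero.ne n)⟩⟩
  have hlist : ∀ l : List (Fin n), ∃ r, ∀ v ∈ l, Relation.ReflTransGen e v r := by
    intro l
    induction l with
    | nil => exact ⟨Classical.arbitrary (Fin n), by simp⟩
    | cons u l ih =>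
      obtain ⟨r, hr⟩ := ih
      obtain ⟨x, hux, hrx⟩ := h u r
      refine ⟨x, ?_⟩
      intro v hv
      rcases List.mem_cons.mp hv with rfl | hv
      · exact hux
      · exact (hr v hv).trans hrx
  obtain ⟨r, hr⟩ := hlist (List.finRange n)
  exact ⟨r, fun v => hr v (List.mem_finRange v)⟩

lemma my_closed_null (ha : ∀ i j, 0 ≤ a i j) (hdiag : ∀ i, a i i = 0)
    (hL : ∀ i j, L i j = if j = i then ∑ k, a i k else -a i j)
    (S : Fin n → Prop) (hclosed : ∀ i j, S i → 0 < a i j → S j)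
    (hne : ∃ i, S i) :
    ∃ v : Fin n → ℝ, v ≠ 0 ∧ Lᵀ.mulVec v = 0 ∧ ∀ i, ¬ S i → v i = 0 := by
  classical
  have hLzero : ∀ i j, S i → ¬ S j → L i j = 0 := by
    intro i j hi hj
    have hij : j ≠ i := fun h => hj (h ▸ hi)
    rw [hL, if_neg hij]
    have : ¬ 0 < a i j := fun h => hj (hclosed i j hi h)
    have := ha i j
    have := not_lt.mp ‹¬ 0 < a i j›
    linarith [this]
  have hsub : ∀ (j : Fin n) (f : Fin n → ℝ), (∀ i, ¬ S i → f i = 0) →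
      ∑ i : {x // S x}, f ↑i = ∑ i, f i := by
    intro j f hf
    rw [← Finset.sum_subtype (Finset.univ.filter S) (fun x => by simp) f]
    exact Finset.sum_subset (Finset.filter_subset _ _)
      (fun x _ hx => hf x (by simpa using hx))
  set B : Matrix {x // S x} {x // S x} ℝ := Matrix.of (fun i j => L ↑i ↑j) with hB
  have hrowsum : ∀ i : {x // S x}, ∑ j, L ↑i j = 0 := by
    intro i
    have := congrFun (my_mulVec_one hdiag hL) ↑i
    simp only [Matrix.mulVec, dotProduct, mul_one, Pi.zero_apply] at this
    exact this
  have hBone : B.mulVec (fun _ => (1:ℝ)) = 0 := by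
    funext i
    simp only [Matrix.mulVec, dotProduct, mul_one, Pi.zero_apply, hB, Matrix.of_apply]
    rw [hsub i (fun j => L ↑i j) (fun j hj => hLzero ↑i j i.2 hj)]
    exact hrowsum i
  have hne' : Nonempty {x // S x} := ⟨⟨hne.choose, hne.choose_spec⟩⟩
  have hone : (fun _ => (1:ℝ)) ≠ (0 : {x // S x} → ℝ) := by
    intro h
    have := congrFun h (Classical.arbitrary _)
    norm_num at this
  have hdetB : B.det = 0 := Matrix.exists_mulVec_eq_zero_iff.mp ⟨_, hone, hBone⟩
  have hdetBT : Bᵀ.det = 0 := by rw [Matrix.det_transpose]; exact hdetB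
  obtain ⟨w, hw0, hw⟩ := Matrix.exists_mulVec_eq_zero_iff.mpr hdetBT
  refine ⟨fun i => if h : S i then w ⟨i, h⟩ else 0, ?_, ?_, ?_⟩
  · intro h
    apply hw0
    funext i
    have := congrFun h ↑i
    simpa [dif_pos i.2] using this
  · funext j
    have hsum : Lᵀ.mulVec (fun i => if h : S i then w ⟨i, h⟩ else 0) j
        = ∑ i : {x // S x}, L ↑i j * w i := by
      simp only [Matrix.mulVec, dotProduct, Matrix.transpose_apply]
      rw [← hsub j (fun i => L i j * (if h : S i then w ⟨i, h⟩ else 0))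
        (fun i hi => by simp only [dif_neg hi, mul_zero])]
      exact Finset.sum_congr rfl (fun i _ => by simp only [dif_pos i.2])
    rw [hsum]
    by_cases hj : S j
    · have := congrFun hw ⟨j, hj⟩
      simp only [Matrix.mulVec, dotProduct, Matrix.transpose_apply, Pi.zero_apply, hB,
        Matrix.of_apply] at this
      simpa using this
    · rw [Pi.zero_apply]
      exact Finset.sum_eq_zero (fun i _ => by rw [hLzero ↑i j i.2 hj, zero_mul])
  · intro i hi
    simp only [dif_neg hi]

lemma my_two_le (ha : ∀ i j, 0 ≤ a i j) (hdiag : ∀ i, a i i = 0)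
    (hL : ∀ i j, L i j = if j = i then ∑ k, a i k else -a i j) [NeZero n]
    (hno : ¬ ∃ r : Fin n, ∀ v : Fin n, Relation.ReflTransGen (fun i j => 0 < a i j) v r) :
    2 ≤ L.charpoly.rootMultiplicity 0 := by
  classical
  have hpair : ∃ u w : Fin n, ∀ x, ¬ (Relation.ReflTransGen (fun i j => 0 < a i j) u x ∧
      Relation.ReflTransGen (fun i j => 0 < a i j) w x) := by
    by_contra hc
    push_neg at hc
    exact hno (my_pair_to_global hc)
  obtain ⟨u, w, huw⟩ := hpair
  set e : Fin n → Fin n → Prop := fun i j => 0 < a i j with he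
  obtain ⟨vS, hvS0, hvS, hvSsupp⟩ := my_closed_null ha hdiag hL
    (fun x => Relation.ReflTransGen e u x)
    (fun i j hi hij => hi.tail hij) ⟨u, Relation.ReflTransGen.refl⟩
  obtain ⟨vT, hvT0, hvT, hvTsupp⟩ := my_closed_null ha hdiag hL
    (fun x => Relation.ReflTransGen e w x)
    (fun i j hi hij => hi.tail hij) ⟨w, Relation.ReflTransGen.refl⟩
  have hind : LinearIndependent ℝ ![vS, vT] := by
    rw [LinearIndependent.pair_iff]
    intro s t hst
    obtain ⟨iS, hiS⟩ := Function.ne_iff.mp hvS0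
    obtain ⟨iT, hiT⟩ := Function.ne_iff.mp hvT0
    have hSiS : Relation.ReflTransGen e u iS := by
      by_contra hc; exact hiS (hvSsupp iS hc)
    have hTiT : Relation.ReflTransGen e w iT := by
      by_contra hc; exact hiT (hvTsupp iT hc)
    have hTiS : vT iS = 0 := hvTsupp iS (fun hc => huw iS ⟨hSiS, hc⟩)
    have hSiT : vS iT = 0 := hvSsupp iT (fun hc => huw iT ⟨hc, hTiT⟩)
    constructor
    · have := congrFun hst iS
      simp only [Pi.add_apply, Pi.smul_apply, smul_eq_mul, Pi.zero_apply, hTiS,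
        mul_zero, add_zero] at this
      rcases mul_eq_zero.mp this with h | h
      · exact h
      · exact absurd h hiS
    · have := congrFun hst iT
      simp only [Pi.add_apply, Pi.smul_apply, smul_eq_mul, Pi.zero_apply, hSiT,
        mul_zero, zero_add] at this
      rcases mul_eq_zero.mp this with h | h
      · exact h
      · exact absurd h hiT
  have hspan : Submodule.span ℝ (Set.range ![vS, vT])
      ≤ Module.End.maxGenEigenspace (Matrix.toLin' Lᵀ) 0 := by
    rw [Submodule.span_le]
    rintro x ⟨i, rfl⟩
    rw [SetLike.mem_coe, Module.End.mem_maxGenEigenspace]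
    refine ⟨1, ?_⟩
    simp only [zero_smul, sub_zero, pow_one]
    fin_cases i
    · simpa [Matrix.toLin'_apply] using hvS
    · simpa [Matrix.toLin'_apply] using hvT
  have h2 : 2 ≤ Module.finrank ℝ
      (Module.End.maxGenEigenspace (Matrix.toLin' Lᵀ) 0) := by
    have := Submodule.finrank_mono hspan
    rwa [finrank_span_eq_card hind, Fintype.card_fin] at this
  calc (2:ℕ) ≤ Module.finrank ℝ (Module.End.maxGenEigenspace (Matrix.toLin' Lᵀ) 0) := h2
    _ = (Matrix.toLin' Lᵀ).charpoly.natTrailingDegree := LinearMap.finrank_maxGenEigenspace_zero_eq _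
    _ = Lᵀ.charpoly.natTrailingDegree := by rw [my_charpoly_toLin']
    _ = L.charpoly.natTrailingDegree := by rw [my_charpoly_transpose]
    _ = L.charpoly.rootMultiplicity 0 := (Polynomial.rootMultiplicity_eq_natTrailingDegree').symm

lemma my_re_pos (ha : ∀ i j, 0 ≤ a i j) (hdiag : ∀ i, a i i = 0)
    (hL : ∀ i j, L i j = if j = i then ∑ k, a i k else -a i j) [NeZero n] :
    ∀ μ ∈ ((L.map (Complex.ofReal)).charpoly).roots, μ ≠ 0 → 0 < μ.re := by
  intro μ hmem hne
  have : Nonempty (Fin n) := ⟨⟨0, Nat.pos_of_ne_zero (NeZero.ne n)⟩⟩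
  set Lc := L.map (Complex.ofReal) with hLc
  have hroot : Lc.charpoly.IsRoot μ := (Polynomial.mem_roots'.mp hmem).2
  have hdet : (μ • (1 : Matrix (Fin n) (Fin n) ℂ) - Lc).det = 0 := by
    rw [← my_charpoly_eval]; exact hroot
  obtain ⟨v, hv0, hv⟩ := Matrix.exists_mulVec_eq_zero_iff.mpr hdet
  have heig : Lc.mulVec v = μ • v := by
    have := hv
    rw [Matrix.sub_mulVec, Matrix.smul_mulVec, Matrix.one_mulVec, sub_eq_zero] at this
    exact this.symm
  obtain ⟨i0, -, hi0⟩ := Finset.exists_max_image Finset.univ (fun i => ‖v i‖)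
    Finset.univ_nonempty
  have hvpos : 0 < ‖v i0‖ := by
    obtain ⟨j, hj⟩ := Function.ne_iff.mp hv0
    calc (0:ℝ) < ‖v j‖ := by
          simpa using (norm_pos_iff.mpr hj)
      _ ≤ ‖v i0‖ := hi0 j (Finset.mem_univ j)
  set d : ℝ := ∑ k, a i0 k with hd
  have hrow : (↑d - μ) * v i0 = ∑ j, (↑(a i0 j) : ℂ) * v j := by
    have h1 : Lc.mulVec v i0 = μ * v i0 := by
      rw [heig]; rfl
    have h2 : Lc.mulVec v i0
        = (↑d) * v i0 + ∑ j ∈ Finset.univ.erase i0, -(↑(a i0 j) : ℂ) * v j := by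
      rw [Matrix.mulVec, dotProduct, ← Finset.add_sum_erase _ _ (Finset.mem_univ i0)]
      congr 1
      · simp only [hLc, Matrix.map_apply, hL, if_pos rfl, hd]
        push_cast
        ring
      · refine Finset.sum_congr rfl fun j hj => ?_
        simp only [hLc, Matrix.map_apply, hL, if_neg (Finset.ne_of_mem_erase hj)]
        push_cast
        ring
    have h3 : ∑ j, (↑(a i0 j) : ℂ) * v j
        = ∑ j ∈ Finset.univ.erase i0, (↑(a i0 j) : ℂ) * v j := by
      rw [← Finset.add_sum_erase _ _ (Finset.mem_univ i0), hdiag]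
      push_cast
      rw [zero_mul, zero_add]
    rw [h3]
    have h5 := h1.symm.trans h2
    have h4 : ∑ j ∈ Finset.univ.erase i0, -(↑(a i0 j) : ℂ) * v j
        = -∑ j ∈ Finset.univ.erase i0, (↑(a i0 j) : ℂ) * v j := by
      rw [← Finset.sum_neg_distrib]
      exact Finset.sum_congr rfl fun j _ => by ring
    rw [h4] at h5
    linear_combination -h5
  have habs : ‖(↑d - μ : ℂ)‖ * ‖v i0‖ ≤ d * ‖v i0‖ := by
    calc ‖(↑d - μ : ℂ)‖ * ‖v i0‖
        = ‖(↑d - μ) * v i0‖ := (norm_mul _ _).symm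
      _ = ‖∑ j, (↑(a i0 j) : ℂ) * v j‖ := by rw [hrow]
      _ ≤ ∑ j, ‖(↑(a i0 j) : ℂ) * v j‖ :=
          norm_sum_le _ _
      _ ≤ ∑ j, a i0 j * ‖v i0‖ := by
          refine Finset.sum_le_sum fun j _ => ?_
          rw [norm_mul, Complex.norm_real, Real.norm_eq_abs, abs_of_nonneg (ha i0 j)]
          exact mul_le_mul_of_nonneg_left (hi0 j (Finset.mem_univ j)) (ha i0 j)
      _ = d * ‖v i0‖ := by rw [← Finset.sum_mul]
  have habs2 : ‖(↑d - μ : ℂ)‖ ≤ d :=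
    le_of_mul_le_mul_right habs hvpos
  have hd0 : 0 ≤ d := Finset.sum_nonneg fun j _ => ha i0 j
  have hsq : (d - μ.re)^2 + μ.im^2 ≤ d^2 := by
    have h1 : (‖(↑d - μ : ℂ)‖)^2 ≤ d^2 := by
      apply pow_le_pow_left₀ (norm_nonneg _) habs2
    rw [Complex.sq_norm, Complex.normSq_apply] at h1
    simp only [Complex.sub_re, Complex.ofReal_re, Complex.sub_im, Complex.ofReal_im,
      zero_sub] at h1
    nlinarith [h1]
  have hpos : 0 < μ.re^2 + μ.im^2 := by
    have := Complex.normSq_pos.mpr hne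
    rwa [Complex.normSq_apply, ← pow_two, ← pow_two] at this
  nlinarith [hsq, hpos, hd0, sq_nonneg μ.im, sq_nonneg (d - μ.re)]


/-- A finite directed weighted graph (nonnegative weights `a`, edges = pairs of positive
weight) has an oriented spanning tree iff its Laplacian has a simple zero eigenvalue
with right eigenvector the all-ones vector; and in that case every other eigenvalue of
the Laplacian has strictly positive real part. -/
theorem laplacian_zero_simple_iff_ost (n : ℕ) [NeZero n]
    (a : Fin n → Fin n → ℝ) (ha : ∀ i j, 0 ≤ a i j) (hdiag : ∀ i, a i i = 0)
    (L : Matrix (Fin n) (Fin n) ℝ)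
    (hL : ∀ i j, L i j = if j = i then ∑ k, a i k else -a i j) :
    ((∃ r : Fin n, ∀ v : Fin n, Relation.ReflTransGen (fun i j => 0 < a i j) v r) ↔
      (L.charpoly.rootMultiplicity 0 = 1 ∧ L.mulVec (fun _ => 1) = 0)) ∧
    ((∃ r : Fin n, ∀ v : Fin n, Relation.ReflTransGen (fun i j => 0 < a i j) v r) →
      ∀ μ ∈ ((L.map (Complex.ofReal)).charpoly).roots, μ ≠ 0 → 0 < μ.re) := by
  constructor
  · constructor
    · rintro ⟨r, hr⟩
      exact ⟨my_rm_eq_one ha hdiag hL hr, my_mulVec_one hdiag hL⟩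
    · rintro ⟨hrm, -⟩
      by_contra hno
      have := my_two_le ha hdiag hL hno
      omega
  · intro _
    exact my_re_pos ha hdiag hL
end
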